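/- For every ε > 0 there exists a constant C = C(ε) > 0 such that for all finitely supported functions b : ℤ² \ {0} → ℂ² and h : ℤ² \ {0} → ℂ one has | Σ_{j+k+l=0} (b_j · k) ( |l|^{-1/2} − |k|^{-1/2} ) h_k |l|^{-1/2} h_l | ≤ C ( Σ_j |j|^{4+2ε} |b_j|² )^{1/2} ( Σ_k |h_k|² )^{1/2} ( Σ_l |l|^{-1} |h_l|² )^{1/2}, where the sum on the left ranges over all triples j, k, l ∈ ℤ² \ {0} with j + k + l = 0, and b_j · k = b_j^{(1)} k₁ + b_j^{(2)} k₂. -/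

import Mathlib

open Real Finset

noncomputable section

/-- Euclidean norm of an integer frequency `k ∈ ℤ²`. -/
def inorm (k : Fin 2 → ℤ) : ℝ := Real.sqrt ((k 0 : ℝ)^2 + (k 1 : ℝ)^2)

namespace FCEaux

def emb (k : Fin 2 → ℤ) : EuclideanSpace ℝ (Fin 2) := WithLp.toLp 2 (fun i => (k i : ℝ))

lemma inorm_eq (k : Fin 2 → ℤ) : inorm k = ‖emb k‖ := by
  rw [EuclideanSpace.norm_eq, Fin.sum_univ_two]
  simp [inorm, emb, Real.norm_eq_abs, sq_abs]

lemma inorm_nonneg (k : Fin 2 → ℤ) : 0 ≤ inorm k := Real.sqrt_nonneg _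

lemma one_le_inorm {k : Fin 2 → ℤ} (hk : k ≠ 0) : 1 ≤ inorm k := by
  have h : (1:ℝ) ≤ (k 0 : ℝ)^2 + (k 1 : ℝ)^2 := by
    have : k 0 ≠ 0 ∨ k 1 ≠ 0 := by
      by_contra hc
      push_neg at hc
      exact hk (funext fun i => by fin_cases i <;> simp [hc.1, hc.2])
    have hsq : ∀ m : ℤ, m ≠ 0 → (1:ℝ) ≤ (m:ℝ)^2 := by
      intro m hm
      have h1 : (1:ℤ) ≤ m^2 := by rcases hm.lt_or_gt with h | h <;> nlinarith
      exact_mod_cast h1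
    rcases this with h0 | h0
    · have := hsq _ h0; nlinarith [sq_nonneg ((k 1 : ℝ))]
    · have := hsq _ h0; nlinarith [sq_nonneg ((k 0 : ℝ))]
  calc (1:ℝ) = Real.sqrt 1 := by simp
  _ ≤ _ := Real.sqrt_le_sqrt h

lemma inorm_triangle (j k : Fin 2 → ℤ) : |inorm k - inorm (-(j+k))| ≤ inorm j := by
  have he : emb (-(j+k)) = -(emb j + emb k) := by
    ext i
    show ((-(j+k)) i : ℝ) = -((j i : ℝ) + (k i : ℝ))
    simp only [Pi.neg_apply, Pi.add_apply]; push_cast; ring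
  rw [inorm_eq, inorm_eq, inorm_eq, he, norm_neg]
  calc |‖emb k‖ - ‖emb j + emb k‖| ≤ ‖emb k - (emb j + emb k)‖ := abs_norm_sub_norm_le _ _
  _ = ‖emb j‖ := by rw [show emb k - (emb j + emb k) = -emb j by abel, norm_neg]

lemma key_scalar {x y j : ℝ} (hx : 1 ≤ x) (hy : 1 ≤ y) (hxy : |x - y| ≤ j) :
    x * |y ^ (-(1:ℝ)/2) - x ^ (-(1:ℝ)/2)| ≤ j := by
  have hx0 : (0:ℝ) ≤ x := by linarith
  have hy0 : (0:ℝ) ≤ y := by linarith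
  set a := Real.sqrt x with ha
  set b := Real.sqrt y with hb
  have ha1 : 1 ≤ a := by rw [ha, show (1:ℝ) = Real.sqrt 1 by simp]; exact Real.sqrt_le_sqrt hx
  have hb1 : 1 ≤ b := by rw [hb, show (1:ℝ) = Real.sqrt 1 by simp]; exact Real.sqrt_le_sqrt hy
  have ha2 : a^2 = x := Real.sq_sqrt hx0
  have hb2 : b^2 = y := Real.sq_sqrt hy0
  have hxr : x ^ (-(1:ℝ)/2) = a⁻¹ := by
    rw [show (-(1:ℝ)/2) = -(1/2) by ring, Real.rpow_neg hx0, ← Real.sqrt_eq_rpow]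
  have hyr : y ^ (-(1:ℝ)/2) = b⁻¹ := by
    rw [show (-(1:ℝ)/2) = -(1/2) by ring, Real.rpow_neg hy0, ← Real.sqrt_eq_rpow]
  rw [hxr, hyr]
  have ha0 : (0:ℝ) < a := by linarith
  have hb0 : (0:ℝ) < b := by linarith
  have h1 : |b⁻¹ - a⁻¹| = |a - b| / (a * b) := by
    rw [show b⁻¹ - a⁻¹ = (a - b)/(a*b) by
        rw [inv_sub_inv hb0.ne' ha0.ne', mul_comm], abs_div,
      abs_of_pos (show (0:ℝ) < a*b by positivity)]
  have h2 : |a - b| * (a + b) = |x - y| := by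
    rw [← abs_of_pos (show (0:ℝ) < a+b by positivity), ← abs_mul, ← ha2, ← hb2]
    congr 1; ring
  rw [h1]
  rw [mul_div_assoc']
  rw [div_le_iff₀ (by positivity)]
  -- goal : x * |a - b| ≤ j * (a * b)
  have hj0 : 0 ≤ j := le_trans (abs_nonneg _) hxy
  have h3 : |a - b| * (a + b) ≤ j := by rw [h2]; exact hxy
  have habs : 0 ≤ |a - b| := abs_nonneg _
  have h5 : a^2 ≤ (a+b)*(a*b) := by nlinarith
  rw [← ha2]
  calc a^2 * |a - b| ≤ ((a+b)*(a*b)) * |a - b| := mul_le_mul_of_nonneg_right h5 habs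
  _ = (|a - b| * (a+b))*(a*b) := by ring
  _ ≤ j * (a*b) := mul_le_mul_of_nonneg_right h3 (by positivity)

lemma cs2 {a b c d : ℝ} (ha : 0 ≤ a) (hb : 0 ≤ b) (hc : 0 ≤ c) (hd : 0 ≤ d) :
    a*c + b*d ≤ Real.sqrt (a^2+b^2) * Real.sqrt (c^2+d^2) := by
  have h : (a*c+b*d)^2 ≤ (a^2+b^2)*(c^2+d^2) := by nlinarith [sq_nonneg (a*d - b*c)]
  calc a*c+b*d = Real.sqrt ((a*c+b*d)^2) := (Real.sqrt_sq (by positivity)).symm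
  _ ≤ Real.sqrt ((a^2+b^2)*(c^2+d^2)) := Real.sqrt_le_sqrt h
  _ = _ := Real.sqrt_mul (by positivity) _

end FCEaux

namespace FCEaux

lemma norm_le_inorm (j : Fin 2 → ℤ) : ‖j‖ ≤ inorm j := by
  rw [EisensteinSeries.norm_eq_max_natAbs, Nat.cast_max]
  have h0 : ((j 0).natAbs : ℝ) ≤ inorm j := by
    rw [show ((j 0).natAbs : ℝ) = |(j 0 : ℝ)| by push_cast [Nat.cast_natAbs]; simp,
      ← Real.sqrt_sq_eq_abs]
    exact Real.sqrt_le_sqrt (by nlinarith [sq_nonneg ((j 1 : ℝ))])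
  have h1 : ((j 1).natAbs : ℝ) ≤ inorm j := by
    rw [show ((j 1).natAbs : ℝ) = |(j 1 : ℝ)| by push_cast [Nat.cast_natAbs]; simp,
      ← Real.sqrt_sq_eq_abs]
    exact Real.sqrt_le_sqrt (by nlinarith [sq_nonneg ((j 0 : ℝ))])
  exact max_le h0 h1

lemma exists_const (ε : ℝ) (hε : 0 < ε) :
    ∃ Cε : ℝ, 0 ≤ Cε ∧ ∀ s : Finset (Fin 2 → ℤ), (0:Fin 2 → ℤ) ∉ s →
      ∑ j ∈ s, inorm j ^ (-(2+2*ε)) ≤ Cε := by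
  have hsum : Summable fun x : Fin 2 → ℤ => ‖x‖ ^ (-(2+2*ε)) :=
    EisensteinSeries.summable_one_div_norm_rpow (by linarith)
  refine ⟨∑' x : Fin 2 → ℤ, ‖x‖ ^ (-(2+2*ε)),
    tsum_nonneg fun x => Real.rpow_nonneg (norm_nonneg _) _, fun s hs => ?_⟩
  have hle : ∀ j ∈ s, inorm j ^ (-(2+2*ε)) ≤ ‖j‖ ^ (-(2+2*ε)) := by
    intro j hj
    have hj0 : j ≠ 0 := fun hc => hs (hc ▸ hj)
    exact Real.rpow_le_rpow_of_nonpos (norm_pos_iff.mpr hj0) (norm_le_inorm j)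
      (by linarith)
  calc ∑ j ∈ s, inorm j ^ (-(2+2*ε)) ≤ ∑ j ∈ s, ‖j‖ ^ (-(2+2*ε)) :=
        Finset.sum_le_sum hle
  _ ≤ _ := Summable.sum_le_tsum s (fun j _ => Real.rpow_nonneg (norm_nonneg _) _) hsum

lemma term_bound (b : (Fin 2 → ℤ) →₀ (Fin 2 → ℂ)) (h : (Fin 2 → ℤ) →₀ ℂ)
    (hb0 : b 0 = 0) (hh0 : h 0 = 0) {j k : Fin 2 → ℤ}
    (hj : j ∈ b.support) (hk : k ∈ h.support) :
    ‖(b j 0 * (k 0 : ℂ) + b j 1 * (k 1 : ℂ))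
      * (((inorm (-(j + k)) ^ (-(1:ℝ)/2) : ℝ) : ℂ) - ((inorm k ^ (-(1:ℝ)/2) : ℝ) : ℂ))
      * h k * ((inorm (-(j + k)) ^ (-(1:ℝ)/2) : ℝ) : ℂ) * h (-(j + k))‖
    ≤ (inorm j * Real.sqrt (‖b j 0‖^2 + ‖b j 1‖^2)) *
      (‖h k‖ * (inorm (-(j+k)) ^ (-(1:ℝ)/2) * ‖h (-(j+k))‖)) := by
  set l : Fin 2 → ℤ := -(j+k) with hl
  by_cases hzl : h l = 0
  · rw [hzl]
    simp only [mul_zero, norm_zero]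
    have : (0:ℝ) ≤ inorm l ^ (-(1:ℝ)/2) := Real.rpow_nonneg (inorm_nonneg _) _
    have hs : (0:ℝ) ≤ Real.sqrt (‖b j 0‖^2 + ‖b j 1‖^2) := Real.sqrt_nonneg _
    positivity
  · have hjne : j ≠ 0 := fun hc => by
      simp only [Finsupp.mem_support_iff] at hj; rw [hc, hb0] at hj; exact hj rfl
    have hkne : k ≠ 0 := fun hc => by
      simp only [Finsupp.mem_support_iff] at hk; rw [hc, hh0] at hk; exact hk rfl
    have hlne : l ≠ 0 := fun hc => hzl (by rw [hc, hh0])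
    have hk1 : 1 ≤ inorm k := one_le_inorm hkne
    have hl1 : 1 ≤ inorm l := one_le_inorm hlne
    have htri : |inorm k - inorm l| ≤ inorm j := inorm_triangle j k
    set x := inorm k
    set y := inorm l
    set A := y ^ (-(1:ℝ)/2) with hA
    set B := x ^ (-(1:ℝ)/2) with hB
    have hA0 : 0 ≤ A := Real.rpow_nonneg (inorm_nonneg _) _
    have hkey : x * |A - B| ≤ inorm j := key_scalar hk1 hl1 htri
    have h1 : ‖b j 0 * (k 0 : ℂ) + b j 1 * (k 1 : ℂ)‖
        ≤ Real.sqrt (‖b j 0‖^2 + ‖b j 1‖^2) * x := by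
      have hx : x = Real.sqrt (|(k 0 : ℝ)|^2 + |(k 1 : ℝ)|^2) := by
        simp only [sq_abs]; rfl
      calc ‖b j 0 * (k 0 : ℂ) + b j 1 * (k 1 : ℂ)‖
          ≤ ‖b j 0 * (k 0 : ℂ)‖ + ‖b j 1 * (k 1 : ℂ)‖ := norm_add_le _ _
      _ = ‖b j 0‖ * |(k 0 : ℝ)| + ‖b j 1‖ * |(k 1 : ℝ)| := by
          rw [norm_mul, norm_mul,
            show ‖((k 0 : ℤ) : ℂ)‖ = |(k 0 : ℝ)| by simp,
            show ‖((k 1 : ℤ) : ℂ)‖ = |(k 1 : ℝ)| by simp]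
      _ ≤ Real.sqrt (‖b j 0‖^2 + ‖b j 1‖^2) * Real.sqrt (|(k 0 : ℝ)|^2 + |(k 1 : ℝ)|^2) :=
          cs2 (norm_nonneg _) (norm_nonneg _) (abs_nonneg _) (abs_nonneg _)
      _ = Real.sqrt (‖b j 0‖^2 + ‖b j 1‖^2) * x := by rw [hx]
    have hnorm : ‖(b j 0 * (k 0 : ℂ) + b j 1 * (k 1 : ℂ))
        * (((y ^ (-(1:ℝ)/2) : ℝ) : ℂ) - ((x ^ (-(1:ℝ)/2) : ℝ) : ℂ))
        * h k * ((y ^ (-(1:ℝ)/2) : ℝ) : ℂ) * h l‖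
        = ‖b j 0 * (k 0 : ℂ) + b j 1 * (k 1 : ℂ)‖ * |A - B| * ‖h k‖ * A * ‖h l‖ := by
      rw [norm_mul, norm_mul, norm_mul, norm_mul, ← Complex.ofReal_sub,
        Complex.norm_real, Complex.norm_real, Real.norm_eq_abs, Real.norm_eq_abs,
        abs_of_nonneg hA0]
    rw [hnorm]
    have hrest : (0:ℝ) ≤ ‖h k‖ * (A * ‖h l‖) :=
      mul_nonneg (norm_nonneg _) (mul_nonneg hA0 (norm_nonneg _))
    have hmain : ‖b j 0 * (k 0 : ℂ) + b j 1 * (k 1 : ℂ)‖ * |A - B|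
        ≤ inorm j * Real.sqrt (‖b j 0‖^2 + ‖b j 1‖^2) := by
      calc ‖b j 0 * (k 0 : ℂ) + b j 1 * (k 1 : ℂ)‖ * |A - B|
          ≤ (Real.sqrt (‖b j 0‖^2 + ‖b j 1‖^2) * x) * |A - B| :=
            mul_le_mul_of_nonneg_right h1 (abs_nonneg _)
      _ = Real.sqrt (‖b j 0‖^2 + ‖b j 1‖^2) * (x * |A - B|) := by ring
      _ ≤ Real.sqrt (‖b j 0‖^2 + ‖b j 1‖^2) * inorm j :=
            mul_le_mul_of_nonneg_left hkey (Real.sqrt_nonneg _)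
      _ = inorm j * Real.sqrt (‖b j 0‖^2 + ‖b j 1‖^2) := by ring
    calc ‖b j 0 * (k 0 : ℂ) + b j 1 * (k 1 : ℂ)‖ * |A - B| * ‖h k‖ * A * ‖h l‖
        = (‖b j 0 * (k 0 : ℂ) + b j 1 * (k 1 : ℂ)‖ * |A - B|) * (‖h k‖ * (A * ‖h l‖)) := by
          ring
    _ ≤ (inorm j * Real.sqrt (‖b j 0‖^2 + ‖b j 1‖^2)) * (‖h k‖ * (A * ‖h l‖)) :=
          mul_le_mul_of_nonneg_right hmain hrest

end FCEaux

namespace FCEaux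

lemma j_sum (h : (Fin 2 → ℤ) →₀ ℂ) (hh0 : h 0 = 0) (j : Fin 2 → ℤ) :
    ∑ k ∈ h.support, ‖h k‖ * (inorm (-(j+k)) ^ (-(1:ℝ)/2) * ‖h (-(j+k))‖)
    ≤ (∑ k ∈ h.support, ‖h k‖^2) ^ ((1:ℝ)/2)
      * (∑ l ∈ h.support, (inorm l)⁻¹ * ‖h l‖^2) ^ ((1:ℝ)/2) := by
  set g : (Fin 2 → ℤ) → ℝ := fun m => inorm m ^ (-(1:ℝ)/2) * ‖h m‖ with hg
  have hg0 : ∀ m, 0 ≤ g m := fun m =>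
    mul_nonneg (Real.rpow_nonneg (inorm_nonneg _) _) (norm_nonneg _)
  have hgsq : ∀ m ∈ h.support, g m ^ 2 = (inorm m)⁻¹ * ‖h m‖^2 := by
    intro m hm
    have : (inorm m ^ (-(1:ℝ)/2))^2 = (inorm m)⁻¹ := by
      rw [← Real.rpow_natCast (inorm m ^ (-(1:ℝ)/2)) 2, ← Real.rpow_mul (inorm_nonneg m),
        show (-(1:ℝ)/2 * ((2:ℕ):ℝ)) = -1 by push_cast; ring, Real.rpow_neg_one]
    rw [hg, mul_pow, this]
  have hcs := Real.sum_mul_le_sqrt_mul_sqrt h.support (fun k => ‖h k‖)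
    (fun k => g (-(j+k)))
  have himg : ∑ k ∈ h.support, g (-(j+k))^2 ≤ ∑ l ∈ h.support, g l ^ 2 := by
    have hinj : Set.InjOn (fun k : Fin 2 → ℤ => -(j+k)) h.support := by
      intro k1 _ k2 _ hkk
      simpa using hkk
    rw [← Finset.sum_image (f := fun m => g m ^ 2) hinj]
    set T := h.support.image (fun k : Fin 2 → ℤ => -(j+k)) with hT
    have hzero : ∀ m, m ∉ h.support → g m ^ 2 = 0 := by
      intro m hm
      have : h m = 0 := Finsupp.notMem_support_iff.mp hm
      simp [hg, this]
    calc ∑ m ∈ T, g m ^ 2 = ∑ m ∈ T.filter (· ∈ h.support), g m ^ 2 := by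
          refine (Finset.sum_subset (Finset.filter_subset _ _) ?_).symm
          intro m hm hmn
          exact hzero m (fun hc => hmn (Finset.mem_filter.mpr ⟨hm, hc⟩))
    _ ≤ ∑ l ∈ h.support, g l ^ 2 := by
          refine Finset.sum_le_sum_of_subset_of_nonneg ?_ (fun m _ _ => sq_nonneg _)
          intro m hm
          exact (Finset.mem_filter.mp hm).2
  have h2 : ∑ l ∈ h.support, g l ^ 2 = ∑ l ∈ h.support, (inorm l)⁻¹ * ‖h l‖^2 :=
    Finset.sum_congr rfl hgsq
  calc ∑ k ∈ h.support, ‖h k‖ * g (-(j+k))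
      ≤ Real.sqrt (∑ k ∈ h.support, ‖h k‖^2) * Real.sqrt (∑ k ∈ h.support, g (-(j+k))^2) :=
        hcs
  _ ≤ Real.sqrt (∑ k ∈ h.support, ‖h k‖^2) * Real.sqrt (∑ l ∈ h.support, (inorm l)⁻¹ * ‖h l‖^2) := by
        refine mul_le_mul_of_nonneg_left (Real.sqrt_le_sqrt ?_) (Real.sqrt_nonneg _)
        rw [← h2]; exact himg
  _ = _ := by rw [Real.sqrt_eq_rpow, Real.sqrt_eq_rpow]

end FCEaux

namespace FCEaux

lemma b_sum {ε Cε : ℝ} (hε : 0 < ε)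
    (hCε : ∀ s : Finset (Fin 2 → ℤ), (0:Fin 2 → ℤ) ∉ s →
      ∑ j ∈ s, inorm j ^ (-(2+2*ε)) ≤ Cε)
    (b : (Fin 2 → ℤ) →₀ (Fin 2 → ℂ)) (hb0 : b 0 = 0) :
    ∑ j ∈ b.support, inorm j * Real.sqrt (‖b j 0‖^2 + ‖b j 1‖^2)
    ≤ Real.sqrt Cε *
      (∑ j ∈ b.support, inorm j ^ ((4:ℝ) + 2 * ε) * (‖b j 0‖^2 + ‖b j 1‖^2)) ^ ((1:ℝ)/2) := by
  have hne : ∀ j ∈ b.support, j ≠ 0 := by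
    intro j hj hc
    simp only [Finsupp.mem_support_iff] at hj
    rw [hc, hb0] at hj; exact hj rfl
  set Bj : (Fin 2 → ℤ) → ℝ := fun j => Real.sqrt (‖b j 0‖^2 + ‖b j 1‖^2) with hBj
  have hsplit : ∀ j ∈ b.support,
      inorm j * Bj j = (inorm j ^ (-(1+ε))) * (inorm j ^ ((2:ℝ)+ε) * Bj j) := by
    intro j hj
    have hpos : 0 < inorm j := lt_of_lt_of_le one_pos (one_le_inorm (hne j hj))
    rw [← mul_assoc, ← Real.rpow_add hpos,
      show (-(1+ε) + ((2:ℝ)+ε)) = 1 by ring, Real.rpow_one]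
  rw [Finset.sum_congr rfl hsplit]
  have hcs := Real.sum_mul_le_sqrt_mul_sqrt b.support
    (fun j => inorm j ^ (-(1+ε))) (fun j => inorm j ^ ((2:ℝ)+ε) * Bj j)
  have hsq1 : ∀ j ∈ b.support, (inorm j ^ (-(1+ε)))^2 = inorm j ^ (-(2+2*ε)) := by
    intro j _
    rw [← Real.rpow_natCast (inorm j ^ (-(1+ε))) 2, ← Real.rpow_mul (inorm_nonneg j)]
    norm_num; ring_nf
  have hsq2 : ∀ j ∈ b.support,
      (inorm j ^ ((2:ℝ)+ε) * Bj j)^2 = inorm j ^ ((4:ℝ) + 2*ε) * (‖b j 0‖^2 + ‖b j 1‖^2) := by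
    intro j _
    rw [mul_pow, ← Real.rpow_natCast (inorm j ^ ((2:ℝ)+ε)) 2, ← Real.rpow_mul (inorm_nonneg j),
      show (((2:ℝ)+ε) * ((2:ℕ):ℝ)) = (4:ℝ) + 2*ε by push_cast; ring,
      hBj, Real.sq_sqrt (by positivity)]
  calc ∑ j ∈ b.support, (inorm j ^ (-(1+ε))) * (inorm j ^ ((2:ℝ)+ε) * Bj j)
      ≤ Real.sqrt (∑ j ∈ b.support, (inorm j ^ (-(1+ε)))^2)
        * Real.sqrt (∑ j ∈ b.support, (inorm j ^ ((2:ℝ)+ε) * Bj j)^2) := hcs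
  _ ≤ Real.sqrt Cε *
      (∑ j ∈ b.support, inorm j ^ ((4:ℝ) + 2 * ε) * (‖b j 0‖^2 + ‖b j 1‖^2)) ^ ((1:ℝ)/2) := by
      rw [Finset.sum_congr rfl hsq2, ← Real.sqrt_eq_rpow]
      refine mul_le_mul_of_nonneg_right (Real.sqrt_le_sqrt ?_) (Real.sqrt_nonneg _)
      rw [Finset.sum_congr rfl hsq1]
      refine hCε b.support ?_
      intro hc
      exact hne 0 hc rfl

end FCEaux

/-- Fourier-side commutator estimate: for every `ε > 0` there is `C > 0` such that for all
finitely supported `b : ℤ²\{0} → ℂ²` and `h : ℤ²\{0} → ℂ`,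
`|Σ_{j+k+l=0} (b_j·k)(|l|^{-1/2} − |k|^{-1/2}) h_k |l|^{-1/2} h_l|
  ≤ C (Σ_j |j|^{4+2ε}|b_j|²)^{1/2} (Σ_k |h_k|²)^{1/2} (Σ_l |l|^{-1}|h_l|²)^{1/2}`,
where the left-hand sum is over triples of nonzero frequencies with `j + k + l = 0`
(parametrized by `j, k`, with `l = −(j+k)`). -/
theorem fourier_commutator_estimate (ε : ℝ) (hε : 0 < ε) :
    ∃ C : ℝ, 0 < C ∧
      ∀ (b : (Fin 2 → ℤ) →₀ (Fin 2 → ℂ)) (h : (Fin 2 → ℤ) →₀ ℂ),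
        b 0 = 0 → h 0 = 0 →
        ‖∑ j ∈ b.support, ∑ k ∈ h.support,
            (b j 0 * (k 0 : ℂ) + b j 1 * (k 1 : ℂ))
            * (((inorm (-(j + k)) ^ (-(1:ℝ)/2) : ℝ) : ℂ)
                - ((inorm k ^ (-(1:ℝ)/2) : ℝ) : ℂ))
            * h k * ((inorm (-(j + k)) ^ (-(1:ℝ)/2) : ℝ) : ℂ) * h (-(j + k))‖
        ≤ C * (∑ j ∈ b.support, inorm j ^ ((4:ℝ) + 2 * ε) * (‖b j 0‖^2 + ‖b j 1‖^2)) ^ ((1:ℝ)/2)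
            * (∑ k ∈ h.support, ‖h k‖^2) ^ ((1:ℝ)/2)
            * (∑ l ∈ h.support, (inorm l)⁻¹ * ‖h l‖^2) ^ ((1:ℝ)/2) := by
  obtain ⟨Cε, hCε0, hCε⟩ := FCEaux.exists_const ε hε
  refine ⟨Real.sqrt Cε + 1, by positivity, ?_⟩
  intro b h hb0 hh0
  set A := (∑ j ∈ b.support, inorm j ^ ((4:ℝ) + 2 * ε) * (‖b j 0‖^2 + ‖b j 1‖^2)) ^ ((1:ℝ)/2)
    with hA
  set B := (∑ k ∈ h.support, ‖h k‖^2) ^ ((1:ℝ)/2) with hB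
  set D := (∑ l ∈ h.support, (inorm l)⁻¹ * ‖h l‖^2) ^ ((1:ℝ)/2) with hD
  have hA0 : 0 ≤ A := by
    refine Real.rpow_nonneg (Finset.sum_nonneg fun j _ => ?_) _
    exact mul_nonneg (Real.rpow_nonneg (FCEaux.inorm_nonneg _) _) (by positivity)
  have hB0 : 0 ≤ B := Real.rpow_nonneg (Finset.sum_nonneg fun k _ => by positivity) _
  have hD0 : 0 ≤ D := by
    refine Real.rpow_nonneg (Finset.sum_nonneg fun l _ => ?_) _
    exact mul_nonneg (inv_nonneg.mpr (FCEaux.inorm_nonneg _)) (by positivity)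
  set Bj : (Fin 2 → ℤ) → ℝ := fun j => Real.sqrt (‖b j 0‖^2 + ‖b j 1‖^2) with hBj
  calc ‖∑ j ∈ b.support, ∑ k ∈ h.support,
            (b j 0 * (k 0 : ℂ) + b j 1 * (k 1 : ℂ))
            * (((inorm (-(j + k)) ^ (-(1:ℝ)/2) : ℝ) : ℂ)
                - ((inorm k ^ (-(1:ℝ)/2) : ℝ) : ℂ))
            * h k * ((inorm (-(j + k)) ^ (-(1:ℝ)/2) : ℝ) : ℂ) * h (-(j + k))‖
      ≤ ∑ j ∈ b.support, ∑ k ∈ h.support,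
          ‖(b j 0 * (k 0 : ℂ) + b j 1 * (k 1 : ℂ))
            * (((inorm (-(j + k)) ^ (-(1:ℝ)/2) : ℝ) : ℂ)
                - ((inorm k ^ (-(1:ℝ)/2) : ℝ) : ℂ))
            * h k * ((inorm (-(j + k)) ^ (-(1:ℝ)/2) : ℝ) : ℂ) * h (-(j + k))‖ :=
        (norm_sum_le _ _).trans (Finset.sum_le_sum fun j _ => norm_sum_le _ _)
  _ ≤ ∑ j ∈ b.support, ∑ k ∈ h.support,
        (inorm j * Bj j) * (‖h k‖ * (inorm (-(j+k)) ^ (-(1:ℝ)/2) * ‖h (-(j+k))‖)) := by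
      refine Finset.sum_le_sum fun j hj => Finset.sum_le_sum fun k hk => ?_
      exact FCEaux.term_bound b h hb0 hh0 hj hk
  _ = ∑ j ∈ b.support, (inorm j * Bj j) *
        (∑ k ∈ h.support, ‖h k‖ * (inorm (-(j+k)) ^ (-(1:ℝ)/2) * ‖h (-(j+k))‖)) := by
      refine Finset.sum_congr rfl fun j _ => ?_
      rw [Finset.mul_sum]
  _ ≤ ∑ j ∈ b.support, (inorm j * Bj j) * (B * D) := by
      refine Finset.sum_le_sum fun j _ => ?_
      refine mul_le_mul_of_nonneg_left (FCEaux.j_sum h hh0 j) ?_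
      exact mul_nonneg (FCEaux.inorm_nonneg _) (Real.sqrt_nonneg _)
  _ = (∑ j ∈ b.support, inorm j * Bj j) * (B * D) := by rw [Finset.sum_mul]
  _ ≤ (Real.sqrt Cε * A) * (B * D) := by
      refine mul_le_mul_of_nonneg_right (FCEaux.b_sum hε hCε b hb0) ?_
      exact mul_nonneg hB0 hD0
  _ ≤ ((Real.sqrt Cε + 1) * A) * (B * D) := by
      refine mul_le_mul_of_nonneg_right ?_ (mul_nonneg hB0 hD0)
      refine mul_le_mul_of_nonneg_right ?_ hA0
      linarith
  _ = (Real.sqrt Cε + 1) * A * B * D := by ring
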